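/- In a Barr exact category C, let σ = (σ_⊤, σ_⊥) : f_E → f_B be a double extension, with kernel pairs (d_⊤, c_⊤) of σ_⊤ and (d_⊥, c_⊥) of σ_⊥ and induced morphism f : Eq(σ_⊤) → Eq(σ_⊥). Then, in the category Ext(C), the parallel pair (d_⊤, d_⊥), (c_⊤, c_⊥) : f ⇉ f_E is the kernel pair of σ : f_E → f_B, and σ is the coequalizer in Ext(C) of this pair; in particular, every double extension is a regular epimorphism in Ext(C). -/

import Mathlib

open CategoryTheory CategoryTheory.Limits

universe v u

namespace Paper

variable {C : Type u} [Category.{v} C]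

/-- `f` is a regular epimorphism. -/
def IsRegEpi {X Y : C} (f : X ⟶ Y) : Prop := Nonempty (RegularEpi f)

/-- A regular category: a finitely complete category with coequalizers of kernel pairs in
which regular epimorphisms are stable under pullback. -/
class RegularCat (C : Type u) [Category.{v} C] [HasFiniteLimits C] : Prop where
  hasCoeqOfKernelPairs : ∀ {X Y : C} (f : X ⟶ Y),
    HasCoequalizer (pullback.fst f f) (pullback.snd f f)
  regEpiPullbackStable : ∀ {X Y Z : C} (f : X ⟶ Y) (g : Z ⟶ Y),
    IsRegEpi f → IsRegEpi (pullback.snd f g)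

/-- An internal equivalence relation given by a parallel pair `r₁ r₂ : R ⟶ X`. -/
structure IsEquivRel [HasFiniteLimits C] {R X : C} (r₁ r₂ : R ⟶ X) : Prop where
  jointlyMono : Mono (prod.lift r₁ r₂)
  refl : ∃ d : X ⟶ R, d ≫ r₁ = 𝟙 X ∧ d ≫ r₂ = 𝟙 X
  symm : ∃ s : R ⟶ R, s ≫ r₁ = r₂ ∧ s ≫ r₂ = r₁
  trans : ∃ t : pullback r₂ r₁ ⟶ R,
    t ≫ r₁ = pullback.fst r₂ r₁ ≫ r₁ ∧ t ≫ r₂ = pullback.snd r₂ r₁ ≫ r₂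

/-- A Barr exact category: a regular category in which every internal equivalence relation
is effective (i.e. is a kernel pair). -/
class BarrExact (C : Type u) [Category.{v} C] [HasFiniteLimits C] extends RegularCat C : Prop where
  equivRelEffective : ∀ {R X : C} (r₁ r₂ : R ⟶ X), IsEquivRel r₁ r₂ →
    ∃ (Y : C) (f : X ⟶ Y), IsKernelPair f r₁ r₂

section DoubleExt
variable [HasFiniteLimits C]

/-- A double extension: a commutative square `αt ≫ fB = fA ≫ αb` of regular epimorphisms
whose comparison morphism to the pullback is also a regular epimorphism. -/
structure IsDoubleExt {A₁ A₀ B₁ B₀ : C} (fA : A₁ ⟶ A₀) (fB : B₁ ⟶ B₀)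
    (αt : A₁ ⟶ B₁) (αb : A₀ ⟶ B₀) : Prop where
  w : αt ≫ fB = fA ≫ αb
  left : IsRegEpi fA
  right : IsRegEpi fB
  top : IsRegEpi αt
  bot : IsRegEpi αb
  comparison : IsRegEpi (pullback.lift fA αt w.symm : A₁ ⟶ pullback αb fB)

end DoubleExt

/-- The category `Ext C` of extensions: the full subcategory of the arrow category of `C`
determined by the regular epimorphisms. -/
abbrev ExtCat (C : Type u) [Category.{v} C] : Type max u v :=
  ObjectProperty.FullSubcategory (fun f : Arrow C => IsRegEpi f.hom)

/-- An object of `Ext C` from a regular epimorphism. -/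
def ExtCat.mk' {X Y : C} (f : X ⟶ Y) (hf : IsRegEpi f) : ExtCat C :=
  ⟨Arrow.mk f, hf⟩

/-- The top (domain) component of a morphism of `Ext C`. -/
def ExtCat.homLeft {f g : ExtCat C} (φ : f ⟶ g) : f.obj.left ⟶ g.obj.left :=
  CommaMorphism.left φ.hom

/-- The bottom (codomain) component of a morphism of `Ext C`. -/
def ExtCat.homRight {f g : ExtCat C} (φ : f ⟶ g) : f.obj.right ⟶ g.obj.right :=
  CommaMorphism.right φ.hom

lemma ExtCat.homLeft_comp {f g h : ExtCat C} (a : f ⟶ g) (b : g ⟶ h) :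
    ExtCat.homLeft (a ≫ b) = ExtCat.homLeft a ≫ ExtCat.homLeft b := rfl

lemma ExtCat.homRight_comp {f g h : ExtCat C} (a : f ⟶ g) (b : g ⟶ h) :
    ExtCat.homRight (a ≫ b) = ExtCat.homRight a ≫ ExtCat.homRight b := rfl

lemma ExtCat.hom_w {f g : ExtCat C} (φ : f ⟶ g) :
    ExtCat.homLeft φ ≫ g.obj.hom = f.obj.hom ≫ ExtCat.homRight φ :=
  CommaMorphism.w φ.hom

/-- A morphism of `Ext C` from a commutative square in `C`. -/
def ExtCat.homMk' {X₁ X₀ Y₁ Y₀ : C} {f : X₁ ⟶ X₀} {g : Y₁ ⟶ Y₀}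
    {hf : IsRegEpi f} {hg : IsRegEpi g}
    (u : X₁ ⟶ Y₁) (v : X₀ ⟶ Y₀) (w : u ≫ g = f ≫ v) :
    ExtCat.mk' f hf ⟶ ExtCat.mk' g hg :=
  ⟨Arrow.homMk (u := u) (v := v) w⟩

/-- A (commutative) square in `C`, with left vertical `left : A₁ ⟶ A₀`, right vertical
`right : B₁ ⟶ B₀`, top horizontal `top : A₁ ⟶ B₁` and bottom horizontal `bot : A₀ ⟶ B₀`. -/
structure Sq (C : Type u) [Category.{v} C] where
  A₁ : C
  A₀ : C
  B₁ : C
  B₀ : C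
  left : A₁ ⟶ A₀
  right : B₁ ⟶ B₀
  top : A₁ ⟶ B₁
  bot : A₀ ⟶ B₀
  w : top ≫ right = left ≫ bot

/-- The square is a double extension. -/
def Sq.IsDE [HasFiniteLimits C] (s : Sq C) : Prop :=
  IsDoubleExt s.left s.right s.top s.bot

/-- A commutative cube, presented as a morphism of squares `Φ : s ⟶ t`. -/
structure SqHom (s t : Sq C) where
  h₁₁ : s.A₁ ⟶ t.A₁
  h₁₀ : s.A₀ ⟶ t.A₀
  h₀₁ : s.B₁ ⟶ t.B₁
  h₀₀ : s.B₀ ⟶ t.B₀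
  wA : h₁₁ ≫ t.left = s.left ≫ h₁₀
  wB : h₀₁ ≫ t.right = s.right ≫ h₀₀
  wt : h₁₁ ≫ t.top = s.top ≫ h₀₁
  wb : h₁₀ ≫ t.bot = s.bot ≫ h₀₀

/-- Composition of cubes (as morphisms of squares). -/
def SqHom.comp {s t u : Sq C} (Φ : SqHom s t) (Ψ : SqHom t u) : SqHom s u where
  h₁₁ := Φ.h₁₁ ≫ Ψ.h₁₁
  h₁₀ := Φ.h₁₀ ≫ Ψ.h₁₀
  h₀₁ := Φ.h₀₁ ≫ Ψ.h₀₁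
  h₀₀ := Φ.h₀₀ ≫ Ψ.h₀₀
  wA := by rw [Category.assoc, Ψ.wA, ← Category.assoc, Φ.wA, Category.assoc]
  wB := by rw [Category.assoc, Ψ.wB, ← Category.assoc, Φ.wB, Category.assoc]
  wt := by rw [Category.assoc, Ψ.wt, ← Category.assoc, Φ.wt, Category.assoc]
  wb := by rw [Category.assoc, Ψ.wb, ← Category.assoc, Φ.wb, Category.assoc]

section Cube
variable [HasFiniteLimits C]

/-- Seen as a morphism `(σ, β) : s ⟶ t` between the double extensions `s` (as the arrow
`s.left → s.right`) and `t`, the face `σ` of the cube: the square from `s.left` to `t.left`. -/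
def SqHom.sigmaSq {s t : Sq C} (Φ : SqHom s t) : Sq C where
  A₁ := s.A₁
  A₀ := s.A₀
  B₁ := t.A₁
  B₀ := t.A₀
  left := s.left
  right := t.left
  top := Φ.h₁₁
  bot := Φ.h₁₀
  w := Φ.wA

/-- The face `β` of the cube: the square from `s.right` to `t.right`. -/
def SqHom.betaSq {s t : Sq C} (Φ : SqHom s t) : Sq C where
  A₁ := s.B₁
  A₀ := s.B₀
  B₁ := t.B₁
  B₀ := t.B₀
  left := s.right
  right := t.right
  top := Φ.h₀₁
  bot := Φ.h₀₀
  w := Φ.wB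

/-- Top component of the componentwise pullback of `t` (i.e. `α`) and `betaSq Φ` (i.e. `β`). -/
noncomputable def SqHom.P₁ {s t : Sq C} (Φ : SqHom s t) : C := pullback t.top Φ.h₀₁

/-- Bottom component of the componentwise pullback of `α` and `β`. -/
noncomputable def SqHom.P₀ {s t : Sq C} (Φ : SqHom s t) : C := pullback t.bot Φ.h₀₀

/-- The induced arrow between the components of the componentwise pullback of `α` and `β`. -/
noncomputable def SqHom.fP {s t : Sq C} (Φ : SqHom s t) : Φ.P₁ ⟶ Φ.P₀ :=
  pullback.map t.top Φ.h₀₁ t.bot Φ.h₀₀ t.left s.right t.right t.w Φ.wB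

/-- The top comparison morphism. -/
noncomputable def SqHom.c₁ {s t : Sq C} (Φ : SqHom s t) : s.A₁ ⟶ Φ.P₁ :=
  pullback.lift Φ.h₁₁ s.top Φ.wt

/-- The bottom comparison morphism. -/
noncomputable def SqHom.c₀ {s t : Sq C} (Φ : SqHom s t) : s.A₀ ⟶ Φ.P₀ :=
  pullback.lift Φ.h₁₀ s.bot Φ.wb

lemma SqHom.comp_w {s t : Sq C} (Φ : SqHom s t) : Φ.c₁ ≫ Φ.fP = s.left ≫ Φ.c₀ := by
  apply pullback.hom_ext
  · simp only [SqHom.c₁, SqHom.c₀, SqHom.fP, SqHom.P₀, SqHom.P₁, Category.assoc]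
    erw [pullback.lift_fst, pullback.lift_fst_assoc, pullback.lift_fst]
    exact Φ.wA
  · simp only [SqHom.c₁, SqHom.c₀, SqHom.fP, SqHom.P₀, SqHom.P₁, Category.assoc]
    erw [pullback.lift_snd, pullback.lift_snd_assoc, pullback.lift_snd]
    exact s.w

/-- The comparison square of the cube `Φ`, from `s.left` to the componentwise pullback
of `α` and `β`. -/
noncomputable def SqHom.compSq {s t : Sq C} (Φ : SqHom s t) : Sq C where
  A₁ := s.A₁
  A₀ := s.A₀
  B₁ := Φ.P₁
  B₀ := Φ.P₀
  left := s.left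
  right := Φ.fP
  top := Φ.c₁
  bot := Φ.c₀
  w := Φ.comp_w

/-- A `3`-cubical extension: the two opposite faces `γ = s` and `α = t`, the two connecting
faces `σ` and `β`, and the comparison square to the componentwise pullback of `α` and `β`
are all double extensions. -/
def SqHom.Is3CubExt {s t : Sq C} (Φ : SqHom s t) : Prop :=
  s.IsDE ∧ t.IsDE ∧ Φ.sigmaSq.IsDE ∧ Φ.betaSq.IsDE ∧ Φ.compSq.IsDE

end Cube

/-- The cube `Φ : s ⟶ t` is a limit cube: the cone from the initial vertex `s.A₁` on the
diagram formed by the remaining seven vertices is a limit cone. -/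
def SqHom.IsLimitCube {s t : Sq C} (Φ : SqHom s t) : Prop :=
  ∀ (W : C) (wA₀ : W ⟶ s.A₀) (wB₁ : W ⟶ s.B₁) (wtA₁ : W ⟶ t.A₁),
    wA₀ ≫ s.bot = wB₁ ≫ s.right →
    wA₀ ≫ Φ.h₁₀ = wtA₁ ≫ t.left →
    wB₁ ≫ Φ.h₀₁ = wtA₁ ≫ t.top →
    ∃! u : W ⟶ s.A₁, u ≫ s.left = wA₀ ∧ u ≫ s.top = wB₁ ∧ u ≫ Φ.h₁₁ = wtA₁

/-- A discrete fibration (of order 3): a `3`-cubical extension which is a limit cube. -/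
def SqHom.IsDiscFib [HasFiniteLimits C] {s t : Sq C} (Φ : SqHom s t) : Prop :=
  Φ.Is3CubExt ∧ Φ.IsLimitCube
section Galois
variable [HasFiniteLimits C]

/-- A strongly E-Birkhoff Galois structure on `C`: a full replete reflective subcategory
(given by the predicate `inB`, the reflector `F` and the unit `η`) such that every unit
component is a regular epimorphism and every naturality square of the unit at a regular
epimorphism is a double extension. -/
structure BirkhoffStructure (C : Type u) [Category.{v} C] [HasFiniteLimits C] where
  inB : C → Prop
  replete : ∀ {X Y : C}, inB X → (X ≅ Y) → inB Y
  F : C ⥤ C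
  η : 𝟭 C ⟶ F
  obj_inB : ∀ A : C, inB (F.obj A)
  unit_regEpi : ∀ A : C, IsRegEpi (η.app A)
  univ : ∀ {A X : C}, inB X → ∀ g : A ⟶ X, ∃! h : F.obj A ⟶ X, η.app A ≫ h = g
  stronglyBirkhoff : ∀ {A B : C} (f : A ⟶ B), IsRegEpi f →
    IsDoubleExt f (F.map f) (η.app A) (η.app B)

/-- A trivial covering: a regular epimorphism whose unit naturality square is a pullback. -/
def TrivialCovering (G : BirkhoffStructure C) {T E : C} (t : T ⟶ E) : Prop :=
  IsRegEpi t ∧ IsPullback (G.η.app T) t (G.F.map t) (G.η.app E)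

/-- A covering: a regular epimorphism whose pullback along some regular epimorphism is a
trivial covering. -/
def Covering (G : BirkhoffStructure C) {A B : C} (c : A ⟶ B) : Prop :=
  IsRegEpi c ∧ ∃ (E : C) (e : E ⟶ B), IsRegEpi e ∧ TrivialCovering G (pullback.snd c e)

end Galois

/-- The underlying square in `C` of a morphism of `Ext C`. -/
def sqOfHom {f g : ExtCat C} (φ : f ⟶ g) : Sq C where
  A₁ := f.obj.left
  A₀ := f.obj.right
  B₁ := g.obj.left
  B₀ := g.obj.right
  left := f.obj.hom
  right := g.obj.hom
  top := ExtCat.homLeft φ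
  bot := ExtCat.homRight φ
  w := ExtCat.hom_w φ

/-- The underlying cube in `C` of a naturality square in `Ext C` of a natural
transformation `η₁ : 𝟭 (Ext C) ⟶ F₁` at a morphism `φ : f ⟶ g` of `Ext C`. -/
def natCube (F₁ : ExtCat C ⥤ ExtCat C) (η₁ : 𝟭 (ExtCat C) ⟶ F₁) {f g : ExtCat C}
    (φ : f ⟶ g) : SqHom (sqOfHom φ) (sqOfHom (F₁.map φ)) where
  h₁₁ := ExtCat.homLeft (η₁.app f)
  h₁₀ := ExtCat.homRight (η₁.app f)
  h₀₁ := ExtCat.homLeft (η₁.app g)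
  h₀₀ := ExtCat.homRight (η₁.app g)
  wA := ExtCat.hom_w (η₁.app f)
  wB := ExtCat.hom_w (η₁.app g)
  wt := by
    have h := congrArg ExtCat.homLeft (η₁.naturality φ)
    rw [ExtCat.homLeft_comp, ExtCat.homLeft_comp] at h
    exact h.symm
  wb := by
    have h := congrArg ExtCat.homRight (η₁.naturality φ)
    rw [ExtCat.homRight_comp, ExtCat.homRight_comp] at h
    exact h.symm

section LevelOne
variable [HasFiniteLimits C]

/-- The level-one Galois structure induced by a strongly E-Birkhoff Galois structure `G`:
the coverings form a reflective subcategory of `Ext C`, with reflector `F₁` and unit `η₁`,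
every unit component is a double extension, and the reflection is strongly E₂-Birkhoff. -/
structure LevelOne (G : BirkhoffStructure C) where
  F₁ : ExtCat C ⥤ ExtCat C
  η₁ : 𝟭 (ExtCat C) ⟶ F₁
  obj_cov : ∀ f : ExtCat C, Covering G (F₁.obj f).obj.hom
  univ : ∀ {f x : ExtCat C}, Covering G x.obj.hom → ∀ g : f ⟶ x,
    ∃! h : F₁.obj f ⟶ x, η₁.app f ≫ h = g
  unit_DE : ∀ f : ExtCat C, (sqOfHom (η₁.app f)).IsDE
  stronglyBirkhoff : ∀ {f g : ExtCat C} (φ : f ⟶ g), (sqOfHom φ).IsDE →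
    (natCube F₁ η₁ φ).Is3CubExt

/-- A trivial double covering: a morphism of `Ext C` whose underlying square is a double
extension and whose `η₁`-naturality square is a pullback in `Ext C`. -/
def TrivDoubleCov {G : BirkhoffStructure C} (L : LevelOne G) {f g : ExtCat C}
    (φ : f ⟶ g) : Prop :=
  (sqOfHom φ).IsDE ∧ IsPullback (L.η₁.app f) φ (L.F₁.map φ) (L.η₁.app g)

/-- A double covering: a double extension `α : d ⟶ c` in `Ext C` such that the pullback of
`α` along some double extension `γ : e ⟶ c` is a trivial double covering. -/
def DoubleCov {G : BirkhoffStructure C} (L : LevelOne G) {d c : ExtCat C}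
    (α : d ⟶ c) : Prop :=
  (sqOfHom α).IsDE ∧ ∃ (e : ExtCat C) (γ : e ⟶ c), (sqOfHom γ).IsDE ∧
    ∃ (p : ExtCat C) (pγ : p ⟶ e) (pα : p ⟶ d),
      IsPullback pγ pα γ α ∧ TrivDoubleCov L pγ

end LevelOne
section RegEpiHelpers

variable {C : Type u} [Category.{v} C]

theorem IsRegEpi.epi {X Y : C} {f : X ⟶ Y} (h : IsRegEpi f) : Epi f := by
  obtain ⟨re⟩ := h
  haveI := RegularEpi.epi f re
  infer_instance

theorem isRegEpi_of_fac {W X Y : C} (f : X ⟶ Y) (l r : W ⟶ X) (w : l ≫ f = r ≫ f)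
    (H : ∀ {T : C} (t : X ⟶ T), l ≫ t = r ≫ t → ∃! t' : Y ⟶ T, f ≫ t' = t) :
    IsRegEpi f :=
  ⟨{ W := W, left := l, right := r, w := w,
     isColimit := Cofork.IsColimit.mk' _ fun s =>
       ⟨(H s.π s.condition).choose, by simpa using (H s.π s.condition).choose_spec.1,
        fun {m} hm => (H s.π s.condition).choose_spec.2 m (by simpa using hm)⟩ }⟩

theorem regEpi_fac' {X Y : C} {f : X ⟶ Y} (re : RegularEpi f) {T : C} (t : X ⟶ T)
    (ht : re.left ≫ t = re.right ≫ t) : ∃! t' : Y ⟶ T, f ≫ t' = t := by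
  haveI := RegularEpi.epi f re
  refine ⟨Cofork.IsColimit.desc re.isColimit t ht, ?_, ?_⟩
  · simpa using Cofork.IsColimit.π_desc' re.isColimit t ht
  · intro y hy
    rw [← cancel_epi f, hy]
    symm
    simpa using Cofork.IsColimit.π_desc' re.isColimit t ht

theorem regEpi_fac [HasFiniteLimits C] {X Y : C} {f : X ⟶ Y} (h : IsRegEpi f) {T : C}
    (t : X ⟶ T) (ht : pullback.fst f f ≫ t = pullback.snd f f ≫ t) :
    ∃! t' : Y ⟶ T, f ≫ t' = t := by
  obtain ⟨re⟩ := h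
  refine regEpi_fac' re t ?_
  have h1 : pullback.lift re.left re.right re.w ≫ pullback.fst f f = re.left :=
    pullback.lift_fst _ _ _
  have h2 : pullback.lift re.left re.right re.w ≫ pullback.snd f f = re.right :=
    pullback.lift_snd _ _ _
  calc re.left ≫ t = (pullback.lift re.left re.right re.w ≫ pullback.fst f f) ≫ t := by
        rw [h1]
    _ = (pullback.lift re.left re.right re.w ≫ pullback.snd f f) ≫ t := by
        rw [Category.assoc, Category.assoc, ht]
    _ = re.right ≫ t := by rw [h2]

theorem isRegEpi_iso_comp {X Y Z : C} (e : X ⟶ Y) [IsIso e] {f : Y ⟶ Z}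
    (hf : IsRegEpi f) : IsRegEpi (e ≫ f) := by
  obtain ⟨re⟩ := hf
  haveI := re
  refine isRegEpi_of_fac (e ≫ f) (re.left ≫ inv e) (re.right ≫ inv e)
    (by simp [re.w]) ?_
  intro T t ht
  obtain ⟨u, hu, hu'⟩ := regEpi_fac' re (inv e ≫ t)
    (by simpa [Category.assoc] using ht)
  refine ⟨u, ?_, ?_⟩
  · show (e ≫ f) ≫ u = t
    rw [Category.assoc, hu, ← Category.assoc]
    simp
  · intro y hy
    have hy' : (e ≫ f) ≫ y = t := hy
    refine hu' y ?_
    rw [← hy']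
    simp

theorem isRegEpi_of_isPullback [HasFiniteLimits C] [RegularCat C] {P X Y Z : C}
    {a : P ⟶ X} {b : P ⟶ Y} {f : X ⟶ Z} {g : Y ⟶ Z}
    (h : IsPullback a b f g) (hf : IsRegEpi f) : IsRegEpi b := by
  have h1 : IsRegEpi (pullback.snd f g) := RegularCat.regEpiPullbackStable f g hf
  have h2 := isRegEpi_iso_comp h.isoPullback.hom h1
  rwa [h.isoPullback_hom_snd] at h2

theorem isRegEpi_comp [HasFiniteLimits C] [RegularCat C] {A B D : C} {f : A ⟶ B}
    {g : B ⟶ D} (hf : IsRegEpi f) (hg : IsRegEpi g) : IsRegEpi (f ≫ g) := by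
  haveI : Epi f := hf.epi
  haveI : Epi g := hg.epi
  have hn₁w : (pullback.fst (f ≫ g) (f ≫ g) ≫ f) ≫ g =
      pullback.snd (f ≫ g) (f ≫ g) ≫ (f ≫ g) := by
    rw [Category.assoc]; exact pullback.condition
  let n₁ : pullback (f ≫ g) (f ≫ g) ⟶ pullback g (f ≫ g) :=
    pullback.lift (pullback.fst (f ≫ g) (f ≫ g) ≫ f) (pullback.snd (f ≫ g) (f ≫ g)) hn₁w
  have hn₁fst : n₁ ≫ pullback.fst g (f ≫ g) = pullback.fst (f ≫ g) (f ≫ g) ≫ f :=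
    pullback.lift_fst _ _ _
  have hn₁snd : n₁ ≫ pullback.snd g (f ≫ g) = pullback.snd (f ≫ g) (f ≫ g) :=
    pullback.lift_snd _ _ _
  have pb₁ : IsPullback (pullback.fst (f ≫ g) (f ≫ g)) n₁ f (pullback.fst g (f ≫ g)) := by
    refine IsPullback.of_isLimit (PullbackCone.IsLimit.mk hn₁fst.symm
      (fun s => pullback.lift s.fst (s.snd ≫ pullback.snd g (f ≫ g)) ?_)
      (fun s => pullback.lift_fst _ _ _) (fun s => ?_) (fun s m hm₁ hm₂ => ?_))
    · rw [← Category.assoc, ← Category.assoc, s.condition, Category.assoc, Category.assoc,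
        pullback.condition]
      rw [Category.assoc]
    · apply pullback.hom_ext
      · rw [Category.assoc, hn₁fst, ← Category.assoc, pullback.lift_fst, s.condition]
      · rw [Category.assoc, hn₁snd, pullback.lift_snd]
    · apply pullback.hom_ext
      · rw [pullback.lift_fst]; exact hm₁
      · rw [pullback.lift_snd, ← hm₂, Category.assoc, hn₁snd]
  have hn₂w : pullback.fst g (f ≫ g) ≫ g = (pullback.snd g (f ≫ g) ≫ f) ≫ g := by
    rw [Category.assoc]; exact pullback.condition
  let n₂ : pullback g (f ≫ g) ⟶ pullback g g :=
    pullback.lift (pullback.fst g (f ≫ g)) (pullback.snd g (f ≫ g) ≫ f) hn₂w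
  have hn₂fst : n₂ ≫ pullback.fst g g = pullback.fst g (f ≫ g) :=
    pullback.lift_fst _ _ _
  have hn₂snd : n₂ ≫ pullback.snd g g = pullback.snd g (f ≫ g) ≫ f :=
    pullback.lift_snd _ _ _
  have pb₂ : IsPullback (pullback.snd g (f ≫ g)) n₂ f (pullback.snd g g) := by
    refine IsPullback.of_isLimit (PullbackCone.IsLimit.mk hn₂snd.symm
      (fun s => pullback.lift (s.snd ≫ pullback.fst g g) s.fst ?_)
      (fun s => pullback.lift_snd _ _ _) (fun s => ?_) (fun s m hm₁ hm₂ => ?_))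
    · rw [Category.assoc, pullback.condition (f := g) (g := g), ← Category.assoc,
        ← s.condition, Category.assoc]
    · apply pullback.hom_ext
      · rw [Category.assoc, hn₂fst, pullback.lift_fst]
      · rw [Category.assoc, hn₂snd, ← Category.assoc, pullback.lift_snd, s.condition]
    · apply pullback.hom_ext
      · rw [pullback.lift_fst, ← hm₂, Category.assoc, hn₂fst]
      · rw [pullback.lift_snd]; exact hm₁
  have hepi₁ : Epi n₁ := (isRegEpi_of_isPullback pb₁ hf).epi
  have hepi₂ : Epi n₂ := (isRegEpi_of_isPullback pb₂ hf).epi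
  have hepiff : Epi (n₁ ≫ n₂) := epi_comp _ _
  have hfffst : (n₁ ≫ n₂) ≫ pullback.fst g g = pullback.fst (f ≫ g) (f ≫ g) ≫ f := by
    rw [Category.assoc, hn₂fst, hn₁fst]
  have hffsnd : (n₁ ≫ n₂) ≫ pullback.snd g g = pullback.snd (f ≫ g) (f ≫ g) ≫ f := by
    rw [Category.assoc, hn₂snd, ← Category.assoc, hn₁snd]
  refine isRegEpi_of_fac (f ≫ g) (pullback.fst (f ≫ g) (f ≫ g))
    (pullback.snd (f ≫ g) (f ≫ g)) pullback.condition ?_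
  intro T t ht
  have hjw : pullback.fst f f ≫ (f ≫ g) = pullback.snd f f ≫ (f ≫ g) := by
    rw [← Category.assoc, ← Category.assoc, pullback.condition]
  have hft : pullback.fst f f ≫ t = pullback.snd f f ≫ t := by
    have e1 : pullback.lift (pullback.fst f f) (pullback.snd f f) hjw ≫
        pullback.fst (f ≫ g) (f ≫ g) = pullback.fst f f := pullback.lift_fst _ _ _
    have e2 : pullback.lift (pullback.fst f f) (pullback.snd f f) hjw ≫
        pullback.snd (f ≫ g) (f ≫ g) = pullback.snd f f := pullback.lift_snd _ _ _
    calc pullback.fst f f ≫ t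
        = (pullback.lift (pullback.fst f f) (pullback.snd f f) hjw ≫
            pullback.fst (f ≫ g) (f ≫ g)) ≫ t := by rw [e1]
      _ = (pullback.lift (pullback.fst f f) (pullback.snd f f) hjw ≫
            pullback.snd (f ≫ g) (f ≫ g)) ≫ t := by
          rw [Category.assoc, Category.assoc, ht]
      _ = pullback.snd f f ≫ t := by rw [e2]
  obtain ⟨t', hft', _⟩ := regEpi_fac hf t hft
  have hgt : pullback.fst g g ≫ t' = pullback.snd g g ≫ t' := by
    rw [← cancel_epi n₂, ← cancel_epi n₁]
    simp only [← Category.assoc]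
    rw [hfffst, hffsnd]
    simp only [Category.assoc]
    rw [hft']
    exact ht
  obtain ⟨t'', hgt'', _⟩ := regEpi_fac hg t' hgt
  refine ⟨t'', ?_, ?_⟩
  · show (f ≫ g) ≫ t'' = t
    rw [Category.assoc, hgt'', hft']
  · intro y hy
    have hy' : (f ≫ g) ≫ y = t := hy
    have : (f ≫ g) ≫ t'' = t := by rw [Category.assoc, hgt'', hft']
    rw [← cancel_epi (f ≫ g), hy', this]

end RegEpiHelpers

/-- In a Barr exact category, for a double extension `σ : f_E → f_B`, the pair
of kernel-pair-projection squares is the kernel pair of `σ` in `Ext C`, `σ` is the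
coequalizer in `Ext C` of this pair; in particular every double extension is a regular
epimorphism in `Ext C`. -/
theorem statement_3 {C : Type u} [Category.{v} C] [HasFiniteLimits C] [BarrExact C]
    {E₁ E₀ B₁ B₀ : C}
    (fE : E₁ ⟶ E₀) (fB : B₁ ⟶ B₀) (σt : E₁ ⟶ B₁) (σb : E₀ ⟶ B₀)
    (hσ : IsDoubleExt fE fB σt σb)
    -- the induced morphism between the kernel pairs of `σt` and `σb`:
    (fR : pullback σt σt ⟶ pullback σb σb)
    (hfR : fR = pullback.map σt σt σb σb fE fE fB hσ.w hσ.w) :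
    ∃ (hR : IsRegEpi fR)
      (wd : pullback.fst σt σt ≫ fE = fR ≫ pullback.fst σb σb)
      (wc : pullback.snd σt σt ≫ fE = fR ≫ pullback.snd σb σb)
      (eq : (ExtCat.homMk' (hf := hR) (hg := hσ.left)
              (pullback.fst σt σt) (pullback.fst σb σb) wd) ≫
              ExtCat.homMk' (hf := hσ.left) (hg := hσ.right) σt σb hσ.w
          = (ExtCat.homMk' (hf := hR) (hg := hσ.left)
              (pullback.snd σt σt) (pullback.snd σb σb) wc) ≫
              ExtCat.homMk' σt σb hσ.w),
      -- `((d⊤,d⊥), (c⊤,c⊥))` is the kernel pair of `σ` in `Ext C`: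
      IsKernelPair (ExtCat.homMk' (hf := hσ.left) (hg := hσ.right) σt σb hσ.w)
        (ExtCat.homMk' (hf := hR) (pullback.fst σt σt) (pullback.fst σb σb) wd)
        (ExtCat.homMk' (hf := hR) (pullback.snd σt σt) (pullback.snd σb σb) wc) ∧
      -- `σ` is the coequalizer in `Ext C` of this parallel pair:
      Nonempty (IsColimit (Cofork.ofπ (ExtCat.homMk' (hf := hσ.left) (hg := hσ.right)
        σt σb hσ.w) eq)) ∧
      -- in particular, `σ` is a regular epimorphism in `Ext C`:
      Nonempty (RegularEpi (ExtCat.homMk' (hf := hσ.left) (hg := hσ.right) σt σb hσ.w)) := by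
  have hRfst : fR ≫ pullback.fst σb σb = pullback.fst σt σt ≫ fE := by
    rw [hfR]; exact pullback.lift_fst _ _ _
  have hRsnd : fR ≫ pullback.snd σb σb = pullback.snd σt σt ≫ fE := by
    rw [hfR]; exact pullback.lift_snd _ _ _
  -- `fR` is a regular epimorphism: it factors as a pullback of the comparison morphism
  -- followed by a pullback of `fE`.
  have hsndN : IsRegEpi (pullback.snd fE (pullback.snd σb σb)) :=
    RegularCat.regEpiPullbackStable fE _ hσ.left
  have hkw : (pullback.snd fE (pullback.snd σb σb) ≫ pullback.fst σb σb) ≫ σb =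
      (pullback.fst fE (pullback.snd σb σb) ≫ σt) ≫ fB := by
    rw [Category.assoc, pullback.condition (f := σb) (g := σb), ← Category.assoc,
      ← pullback.condition (f := fE) (g := pullback.snd σb σb), Category.assoc, Category.assoc,
      ← hσ.w]
  let k : pullback fE (pullback.snd σb σb) ⟶ pullback σb fB :=
    pullback.lift (pullback.snd fE (pullback.snd σb σb) ≫ pullback.fst σb σb)
      (pullback.fst fE (pullback.snd σb σb) ≫ σt) hkw
  have hkfst : k ≫ pullback.fst σb fB =
      pullback.snd fE (pullback.snd σb σb) ≫ pullback.fst σb σb := pullback.lift_fst _ _ _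
  have hksnd : k ≫ pullback.snd σb fB =
      pullback.fst fE (pullback.snd σb σb) ≫ σt := pullback.lift_snd _ _ _
  let c : E₁ ⟶ pullback σb fB := pullback.lift fE σt hσ.w.symm
  have hcfst : c ≫ pullback.fst σb fB = fE := pullback.lift_fst _ _ _
  have hcsnd : c ≫ pullback.snd σb fB = σt := pullback.lift_snd _ _ _
  have hc : IsRegEpi c := hσ.comparison
  let m₁ : pullback σt σt ⟶ pullback fE (pullback.snd σb σb) :=
    pullback.lift (pullback.snd σt σt) fR hRsnd.symm
  have hm₁fst : m₁ ≫ pullback.fst fE (pullback.snd σb σb) = pullback.snd σt σt :=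
    pullback.lift_fst _ _ _
  have hm₁snd : m₁ ≫ pullback.snd fE (pullback.snd σb σb) = fR := pullback.lift_snd _ _ _
  have heq : pullback.fst σt σt ≫ c = m₁ ≫ k := by
    apply pullback.hom_ext
    · rw [Category.assoc, hcfst, Category.assoc, hkfst, ← Category.assoc, hm₁snd, hRfst]
    · rw [Category.assoc, hcsnd, Category.assoc, hksnd, ← Category.assoc, hm₁fst,
        pullback.condition (f := σt) (g := σt)]
  have pbm : IsPullback (pullback.fst σt σt) m₁ c k := by
    refine IsPullback.of_isLimit (PullbackCone.IsLimit.mk heq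
      (fun s => pullback.lift s.fst (s.snd ≫ pullback.fst fE (pullback.snd σb σb)) ?_)
      (fun s => pullback.lift_fst _ _ _) (fun s => ?_) (fun s m hm₁' hm₂' => ?_))
    · have h1 : s.fst ≫ c ≫ pullback.snd σb fB = s.snd ≫ k ≫ pullback.snd σb fB := by
        rw [← Category.assoc, ← Category.assoc, s.condition]
      rw [hcsnd, hksnd, ← Category.assoc] at h1
      exact h1
    · apply pullback.hom_ext
      · simp only [Category.assoc]
        rw [hm₁fst, pullback.lift_snd]
      · simp only [Category.assoc]
        rw [hm₁snd]
        apply pullback.hom_ext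
        · simp only [Category.assoc]
          have h1 : s.fst ≫ c ≫ pullback.fst σb fB = s.snd ≫ k ≫ pullback.fst σb fB := by
            rw [← Category.assoc, ← Category.assoc, s.condition]
          rw [hcfst, hkfst] at h1
          rw [hRfst, ← Category.assoc, pullback.lift_fst]
          exact h1
        · simp only [Category.assoc]
          rw [hRsnd, ← Category.assoc, pullback.lift_snd]
          simp only [Category.assoc]
          rw [pullback.condition (f := fE) (g := pullback.snd σb σb)]
    · apply pullback.hom_ext
      · rw [pullback.lift_fst]; exact hm₁'
      · rw [pullback.lift_snd, ← hm₂', Category.assoc, hm₁fst]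
  have hm₁ : IsRegEpi m₁ := isRegEpi_of_isPullback pbm hc
  have hR : IsRegEpi fR := by
    have h := isRegEpi_comp hm₁ hsndN
    rwa [hm₁snd] at h
  have eqσ : (ExtCat.homMk' (hf := hR) (hg := hσ.left)
        (pullback.fst σt σt) (pullback.fst σb σb) hRfst.symm) ≫
        ExtCat.homMk' (hf := hσ.left) (hg := hσ.right) σt σb hσ.w
      = (ExtCat.homMk' (hf := hR) (hg := hσ.left)
        (pullback.snd σt σt) (pullback.snd σb σb) hRsnd.symm) ≫
        ExtCat.homMk' σt σb hσ.w := by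
    refine ObjectProperty.hom_ext (h := CommaMorphism.ext ?_ ?_)
    · show pullback.fst σt σt ≫ σt = pullback.snd σt σt ≫ σt
      exact pullback.condition
    · show pullback.fst σb σb ≫ σb = pullback.snd σb σb ≫ σb
      exact pullback.condition
  -- the coequalizer in `Ext C`
  have hcoeq : Nonempty (IsColimit (Cofork.ofπ
      (ExtCat.homMk' (hf := hσ.left) (hg := hσ.right) σt σb hσ.w) eqσ)) := by
    haveI hepit : Epi σt := hσ.top.epi
    haveI hepib : Epi σb := hσ.bot.epi
    refine ⟨Cofork.IsColimit.mk' _ (fun s => ?_)⟩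
    have ht : pullback.fst σt σt ≫ CommaMorphism.left s.π.hom =
        pullback.snd σt σt ≫ CommaMorphism.left s.π.hom := congrArg (fun x => CommaMorphism.left x.hom) s.condition
    have hb : pullback.fst σb σb ≫ CommaMorphism.right s.π.hom =
        pullback.snd σb σb ≫ CommaMorphism.right s.π.hom := congrArg (fun x => CommaMorphism.right x.hom) s.condition
    have Ht := regEpi_fac hσ.top (CommaMorphism.left s.π.hom) ht
    have Hb := regEpi_fac hσ.bot (CommaMorphism.right s.π.hom) hb
    have hu₁ : σt ≫ Ht.choose = CommaMorphism.left s.π.hom := Ht.choose_spec.1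
    have hu₀ : σb ≫ Hb.choose = CommaMorphism.right s.π.hom := Hb.choose_spec.1
    have hw' : Ht.choose ≫ s.pt.obj.hom = fB ≫ Hb.choose := by
      rw [← cancel_epi σt]
      calc σt ≫ Ht.choose ≫ s.pt.obj.hom = (σt ≫ Ht.choose) ≫ s.pt.obj.hom := by
            rw [Category.assoc]
        _ = (CommaMorphism.left s.π.hom ≫ s.pt.obj.hom : E₁ ⟶ s.pt.obj.right) := by rw [hu₁]
        _ = (fE ≫ CommaMorphism.right s.π.hom : E₁ ⟶ s.pt.obj.right) := ExtCat.hom_w s.π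
        _ = fE ≫ σb ≫ Hb.choose := by rw [hu₀]
        _ = (fE ≫ σb) ≫ Hb.choose := by rw [Category.assoc]
        _ = (σt ≫ fB) ≫ Hb.choose := by rw [hσ.w]
        _ = σt ≫ fB ≫ Hb.choose := by rw [Category.assoc]
    refine ⟨⟨{ left := Ht.choose, right := Hb.choose, w := hw' }⟩, ?_, ?_⟩
    · refine ObjectProperty.hom_ext (h := CommaMorphism.ext ?_ ?_)
      · show σt ≫ Ht.choose = CommaMorphism.left s.π.hom
        exact hu₁
      · show σb ≫ Hb.choose = CommaMorphism.right s.π.hom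
        exact hu₀
    · intro m hm
      refine ObjectProperty.hom_ext (h := CommaMorphism.ext ?_ ?_)
      · exact Ht.choose_spec.2 _ (congrArg (fun x => CommaMorphism.left x.hom) hm)
      · exact Hb.choose_spec.2 _ (congrArg (fun x => CommaMorphism.right x.hom) hm)
  refine ⟨hR, hRfst.symm, hRsnd.symm, eqσ, ?_, hcoeq,
    ⟨{ W := ExtCat.mk' fR hR
       left := ExtCat.homMk' (hf := hR) (hg := hσ.left)
         (pullback.fst σt σt) (pullback.fst σb σb) hRfst.symm
       right := ExtCat.homMk' (hf := hR) (hg := hσ.left)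
         (pullback.snd σt σt) (pullback.snd σb σb) hRsnd.symm
       w := eqσ
       isColimit := hcoeq.some }⟩⟩
  -- the kernel pair in `Ext C`
  case _ =>
    refine IsPullback.of_isLimit (PullbackCone.IsLimit.mk eqσ (fun s => ?_) (fun s => ?_)
      (fun s => ?_) (fun s m hm₁' hm₂' => ?_))
    case _ =>
      -- the lift
      have h1 : CommaMorphism.left s.fst.hom ≫ σt = CommaMorphism.left s.snd.hom ≫ σt :=
        congrArg (fun x => CommaMorphism.left x.hom) s.condition
      have h2 : CommaMorphism.right s.fst.hom ≫ σb = CommaMorphism.right s.snd.hom ≫ σb :=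
        congrArg (fun x => CommaMorphism.right x.hom) s.condition
      refine ⟨{ left := pullback.lift (CommaMorphism.left s.fst.hom) (CommaMorphism.left s.snd.hom) h1
                right := pullback.lift (CommaMorphism.right s.fst.hom) (CommaMorphism.right s.snd.hom) h2
                w := ?_ }⟩
      have hw : ∀ (X Y : C) (h : X ⟶ Y) (a b : X ⟶ E₁) (a' b' : Y ⟶ E₀)
          (ha : a ≫ fE = h ≫ a') (hb : b ≫ fE = h ≫ b') (h1 : a ≫ σt = b ≫ σt)
          (h2 : a' ≫ σb = b' ≫ σb),
          pullback.lift a b h1 ≫ fR = h ≫ pullback.lift a' b' h2 := by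
        intro X Y h a b a' b' ha hb h1 h2
        apply pullback.hom_ext
        · simp only [Category.assoc]
          rw [hRfst, ← Category.assoc, pullback.lift_fst, pullback.lift_fst]
          exact ha
        · simp only [Category.assoc]
          rw [hRsnd, ← Category.assoc, pullback.lift_snd, pullback.lift_snd]
          exact hb
      exact hw _ _ _ _ _ _ _ (ExtCat.hom_w s.fst) (ExtCat.hom_w s.snd) h1 h2
    case _ =>
      refine ObjectProperty.hom_ext (h := CommaMorphism.ext ?_ ?_)
      · exact pullback.lift_fst _ _ _
      · exact pullback.lift_fst _ _ _
    case _ =>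
      refine ObjectProperty.hom_ext (h := CommaMorphism.ext ?_ ?_)
      · exact pullback.lift_snd _ _ _
      · exact pullback.lift_snd _ _ _
    case _ =>
      refine ObjectProperty.hom_ext (h := CommaMorphism.ext ?_ ?_)
      · apply pullback.hom_ext
        · exact (congrArg (fun x => CommaMorphism.left x.hom) hm₁').trans
            (pullback.lift_fst (f := σt) (g := σt) _ _ _).symm
        · exact (congrArg (fun x => CommaMorphism.left x.hom) hm₂').trans
            (pullback.lift_snd (f := σt) (g := σt) _ _ _).symm
      · apply pullback.hom_ext
        · exact (congrArg (fun x => CommaMorphism.right x.hom) hm₁').trans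
            (pullback.lift_fst (f := σb) (g := σb) _ _ _).symm
        · exact (congrArg (fun x => CommaMorphism.right x.hom) hm₂').trans
            (pullback.lift_snd (f := σb) (g := σb) _ _ _).symm

end Paper
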